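/- For the four-job instance with parameter p, every feasible due-date assignment d satisfies ∑_{j=1}^4 f_j(d_j) ≥ 4p. -/

import Mathlib

open Finset ENNReal

/-- The cost functions of the four-job tight instance with parameter `p`:
jobs `0,1` cost `0` on `[1, p−1]`, `p` on `[p, 3p−1]`, and `∞` afterwards;
jobs `2,3` cost `0` on `[1, 3p−2]` and `p` afterwards. -/
noncomputable def f8 (p : ℕ) (j : Fin 4) (t : ℕ) : ℝ≥0∞ :=
  if (j : ℕ) < 2 then
    if t ≤ p - 1 then 0 else if t ≤ 3 * p - 1 then (p : ℝ≥0∞) else ⊤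
  else
    if t ≤ 3 * p - 2 then 0 else (p : ℝ≥0∞)

/-- For the four-job instance with parameter `p ≥ 4` (four jobs of
processing time `p`, so `T = 4p`), every feasible due-date assignment `d` satisfies
`∑_{j=1}^{4} f_j(d_j) ≥ 4p.` -/
theorem stmt_8 (p : ℕ) (hp : 4 ≤ p) (d : Fin 4 → ℕ)
    (hdT : ∀ j, d j ∈ Icc 1 (4 * p))
    (hfeas : ∀ t ∈ Icc 1 (4 * p),
      4 * p + 1 - t ≤ ∑ j ∈ univ.filter (fun j : Fin 4 => t ≤ d j), p) :
    ((4 * p : ℕ) : ℝ≥0∞) ≤ ∑ j, f8 p j (d j) := by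
  have key : ∀ t, 1 ≤ t → t ≤ 4 * p →
      4 * p + 1 - t ≤ (if t ≤ d 0 then p else 0) + (if t ≤ d 1 then p else 0)
        + (if t ≤ d 2 then p else 0) + (if t ≤ d 3 then p else 0) := by
    intro t h1 h2
    have h := hfeas t (mem_Icc.mpr ⟨h1, h2⟩)
    rwa [Finset.sum_filter, Fin.sum_univ_four] at h
  -- if a job in {0,1} has due date ≥ 3p, its cost is ⊤
  by_cases h0 : d 0 ≤ 3 * p - 1
  swap
  · have htop : f8 p 0 (d 0) = ⊤ := by
      simp only [f8]
      rw [if_pos (by norm_num), if_neg (by omega), if_neg (by omega)]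
    have : (⊤ : ℝ≥0∞) ≤ ∑ j, f8 p j (d j) := by
      rw [← htop]
      exact Finset.single_le_sum (f := fun j : Fin 4 => f8 p j (d j)) (fun i _ => zero_le) (Finset.mem_univ 0)
    exact le_trans le_top this
  by_cases h1 : d 1 ≤ 3 * p - 1
  swap
  · have htop : f8 p 1 (d 1) = ⊤ := by
      simp only [f8]
      rw [if_pos (by norm_num), if_neg (by omega), if_neg (by omega)]
    have : (⊤ : ℝ≥0∞) ≤ ∑ j, f8 p j (d j) := by
      rw [← htop]
      exact Finset.single_le_sum (f := fun j : Fin 4 => f8 p j (d j)) (fun i _ => zero_le) (Finset.mem_univ 1)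
    exact le_trans le_top this
  have hA : p ≤ d 0 ∧ p ≤ d 1 ∧ p ≤ d 2 ∧ p ≤ d 3 := by
    have := key p (by omega) (by omega)
    split_ifs at this <;> omega
  have hB : 3 * p ≤ d 2 ∧ 3 * p ≤ d 3 := by
    have := key (3 * p) (by omega) (by omega)
    split_ifs at this <;> omega
  rw [Fin.sum_univ_four]
  have e0 : f8 p 0 (d 0) = (p : ℝ≥0∞) := by
    simp only [f8]
    rw [if_pos (by norm_num), if_neg (by omega), if_pos (by omega)]
  have e1 : f8 p 1 (d 1) = (p : ℝ≥0∞) := by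
    simp only [f8]
    rw [if_pos (by norm_num), if_neg (by omega), if_pos (by omega)]
  have e2 : f8 p 2 (d 2) = (p : ℝ≥0∞) := by
    simp only [f8]
    rw [if_neg (by decide), if_neg (by omega)]
  have e3 : f8 p 3 (d 3) = (p : ℝ≥0∞) := by
    simp only [f8]
    rw [if_neg (by decide), if_neg (by omega)]
  rw [e0, e1, e2, e3]
  push_cast
  ring_nf
  exact le_refl _
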